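/- For any density matrices ρ and ξ on ℂ^d, any p ∈ (0,1), and any δ ≥ 0: if S((1−p)ρ + pξ) − [(1−p)S(ρ) + pS(ξ)] ≤ δ, then ‖ρ − ξ‖₂² ≤ 2(ln 2)δ/(p(1−p)). -/

import Mathlib

open scoped ComplexOrder

noncomputable section

/-- The Frobenius (Hilbert–Schmidt) norm of a complex matrix. -/
def frob {m n : Type*} [Fintype m] [Fintype n] (A : Matrix m n ℂ) : ℝ :=
  Real.sqrt (∑ i, ∑ j, ‖A i j‖ ^ 2)

/-- The von Neumann entropy in bits: S(ρ) = −∑ᵢ λᵢ log₂ λᵢ over the eigenvalues of ρ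
(with the convention 0·log₂ 0 = 0, which holds since `Real.logb 2 0 = 0`). -/
def vnEntropy {n : Type*} [Fintype n] [DecidableEq n] (ρ : Matrix n n ℂ) : ℝ :=
  if h : ρ.IsHermitian then ∑ i, -(h.eigenvalues i * Real.logb 2 (h.eigenvalues i)) else 0

namespace SEG

open Matrix

variable {n : Type*} [Fintype n] [DecidableEq n]

lemma scalar_key {a c : ℝ} (ha0 : 0 ≤ a) (ha1 : a ≤ 1) (hc0 : 0 < c) (hc1 : c ≤ 1) :
    (a - c)^2 / 2 ≤ a * Real.log a - a * Real.log c - a + c := by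
  rcases eq_or_lt_of_le ha0 with rfl | ha0
  · simp only [Real.log_zero, zero_mul, mul_zero]
    nlinarith [hc0, hc1]
  set g : ℝ → ℝ := fun x => x * Real.log x - x * Real.log c - x + c - (x - c)^2/2 with hg
  have hderiv : ∀ x ∈ Set.Ioi (0:ℝ), HasDerivAt g (Real.log x - Real.log c - (x - c)) x := by
    intro x hx
    have h1 : HasDerivAt (fun x : ℝ => x * Real.log x) (Real.log x + 1) x :=
      Real.hasDerivAt_mul_log (ne_of_gt hx)
    have h2 : HasDerivAt (fun x : ℝ => x * Real.log c) (Real.log c) x := by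
      simpa using (hasDerivAt_id x).mul_const (Real.log c)
    have h3 : HasDerivAt (fun x : ℝ => (x - c)^2/2) (x - c) x := by
      have := (((hasDerivAt_id x).sub_const c).pow 2).div_const 2
      simpa using this
    have := (((h1.sub h2).sub (hasDerivAt_id x)).add_const c).sub h3
    exact this.congr_deriv (by ring)
  have hcont : Continuous g := by
    have := Real.continuous_mul_log
    fun_prop
  have hgc : g c = 0 := by simp [hg]
  have key : 0 ≤ g a := by
    rcases le_total c a with hca | hac
    · have mono : MonotoneOn g (Set.Icc c 1) := by
        apply monotoneOn_of_deriv_nonneg (convex_Icc c 1) hcont.continuousOn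
        · intro x hx
          rw [interior_Icc] at hx
          exact (hderiv x (lt_trans hc0 hx.1)).differentiableAt.differentiableWithinAt
        intro x hx
        rw [interior_Icc] at hx
        rw [(hderiv x (lt_trans hc0 hx.1)).deriv]
        have hlog := Real.log_le_sub_one_of_pos (div_pos hc0 (lt_trans hc0 hx.1))
        rw [Real.log_div (ne_of_gt hc0) (ne_of_gt (lt_trans hc0 hx.1))] at hlog
        have hx0 : (0:ℝ) < x := lt_trans hc0 hx.1
        nlinarith [mul_le_mul_of_nonneg_right hlog hx0.le, div_mul_cancel₀ c (ne_of_gt hx0),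
          mul_nonneg (sub_nonneg.mpr hx.1.le) (sub_nonneg.mpr hx.2.le)]
      have := mono (Set.mem_Icc.mpr ⟨le_refl c, hc1⟩) (Set.mem_Icc.mpr ⟨hca, ha1⟩) hca
      rw [hgc] at this; exact this
    · have anti : AntitoneOn g (Set.Icc a c) := by
        apply antitoneOn_of_deriv_nonpos (convex_Icc a c) hcont.continuousOn
        · intro x hx
          rw [interior_Icc] at hx
          exact (hderiv x (lt_trans ha0 hx.1)).differentiableAt.differentiableWithinAt
        intro x hx
        rw [interior_Icc] at hx
        have hx0 : (0:ℝ) < x := lt_trans ha0 hx.1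
        rw [(hderiv x hx0).deriv]
        have hlog := Real.log_le_sub_one_of_pos (div_pos hx0 hc0)
        rw [Real.log_div (ne_of_gt hx0) (ne_of_gt hc0)] at hlog
        have hLneg : Real.log x < Real.log c := Real.log_lt_log hx0 hx.2
        nlinarith [mul_le_mul_of_nonneg_right hlog hc0.le, div_mul_cancel₀ x (ne_of_gt hc0),
          mul_nonpos_of_nonpos_of_nonneg (sub_nonpos.mpr hLneg.le) (sub_nonneg.mpr hc1)]
      have := anti (Set.mem_Icc.mpr ⟨le_refl a, hac⟩) (Set.mem_Icc.mpr ⟨hac, le_refl c⟩) hac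
      rw [hgc] at this; exact this
  simp only [hg] at key
  linarith

lemma trace_key {A B : Matrix n n ℂ} (hA : A.IsHermitian) (hB : B.IsHermitian) :
    (A * B).trace = ((∑ i, ∑ j, hA.eigenvalues i * hB.eigenvalues j *
      Complex.normSq ((star (hA.eigenvectorUnitary : Matrix n n ℂ) *
        (hB.eigenvectorUnitary : Matrix n n ℂ)) i j) : ℝ) : ℂ) := by
  set U := (hA.eigenvectorUnitary : Matrix n n ℂ) with hUdef
  set V := (hB.eigenvectorUnitary : Matrix n n ℂ) with hVdef
  have hU : star U * U = 1 := (Matrix.mem_unitaryGroup_iff').mp (hA.eigenvectorUnitary).2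
  have hU2 : U * star U = 1 := (Matrix.mem_unitaryGroup_iff).mp (hA.eigenvectorUnitary).2
  set Da := (diagonal (RCLike.ofReal ∘ hA.eigenvalues) : Matrix n n ℂ) with hDa
  set Db := (diagonal (RCLike.ofReal ∘ hB.eigenvalues) : Matrix n n ℂ) with hDb
  set W := star U * V with hW
  have h1 : A * B = U * (Da * W * Db * star W) * star U := by
    conv_lhs => rw [hA.spectral_theorem, hB.spectral_theorem, Unitary.conjStarAlgAut_apply,
      Unitary.conjStarAlgAut_apply]
    rw [hW, Matrix.star_mul, star_star]
    simp only [← hUdef, ← hVdef, ← hDa, ← hDb, Matrix.mul_assoc, hU2, Matrix.mul_one]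
  rw [h1, trace_mul_comm, ← Matrix.mul_assoc, hU, Matrix.one_mul]
  rw [Matrix.trace]
  push_cast
  congr 1
  ext i
  simp only [Matrix.diag_apply, Matrix.mul_apply, Matrix.conjTranspose_apply, hDa, hDb,
    Matrix.diagonal_apply, Function.comp_apply, Matrix.star_apply, RCLike.ofReal_alg,
    ite_mul, zero_mul, mul_ite, mul_zero, Finset.sum_ite_eq, Finset.sum_ite_eq',
    Finset.mem_univ, if_true, Complex.real_smul, smul_eq_mul, mul_one]
  congr 1; ext j
  rw [show ((Complex.normSq (W i j) : ℝ) : ℂ) = W i j * star (W i j) from (Complex.mul_conj _).symm]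
  ring

lemma quad_key {A B : Matrix n n ℂ} (hA : A.IsHermitian) (hB : B.IsHermitian) (k : n) :
    (star (hB.eigenvectorUnitary : Matrix n n ℂ) * A * (hB.eigenvectorUnitary : Matrix n n ℂ)) k k
      = ((∑ i, hA.eigenvalues i * Complex.normSq ((star (hA.eigenvectorUnitary : Matrix n n ℂ) *
        (hB.eigenvectorUnitary : Matrix n n ℂ)) i k) : ℝ) : ℂ) := by
  set U := (hA.eigenvectorUnitary : Matrix n n ℂ) with hUdef
  set V := (hB.eigenvectorUnitary : Matrix n n ℂ) with hVdef
  set Da := (diagonal (RCLike.ofReal ∘ hA.eigenvalues) : Matrix n n ℂ) with hDa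
  set W := star U * V with hW
  have h1 : star V * A * V = star W * Da * W := by
    conv_lhs => rw [hA.spectral_theorem, Unitary.conjStarAlgAut_apply]
    rw [hW, Matrix.star_mul, star_star]
    simp only [← hUdef, ← hVdef, ← hDa, Matrix.mul_assoc]
  rw [h1]
  push_cast
  simp only [Matrix.mul_apply, Matrix.conjTranspose_apply, hDa,
    Matrix.diagonal_apply, Function.comp_apply, Matrix.star_apply, RCLike.ofReal_alg,
    ite_mul, zero_mul, mul_ite, mul_zero, Finset.sum_ite_eq, Finset.sum_ite_eq',
    Finset.mem_univ, if_true, Complex.real_smul, smul_eq_mul, mul_one]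
  congr 1; ext i
  rw [show ((Complex.normSq (W i k) : ℝ) : ℂ) = W i k * star (W i k) from (Complex.mul_conj _).symm]
  ring

lemma sum_eig {A : Matrix n n ℂ} (hA : A.IsHermitian) :
    A.trace = ((∑ i, hA.eigenvalues i : ℝ) : ℂ) := by
  conv_lhs => rw [hA.spectral_theorem, Unitary.conjStarAlgAut_apply]
  rw [trace_mul_comm, ← Matrix.mul_assoc,
    (Matrix.mem_unitaryGroup_iff').mp (hA.eigenvectorUnitary).2, Matrix.one_mul, trace_diagonal]
  push_cast
  rfl

lemma sum_normSq_row {W : Matrix n n ℂ} (h1 : W * star W = 1) (i : n) :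
    ∑ j, Complex.normSq (W i j) = 1 := by
  have h := congrFun (congrFun h1 i) i
  rw [Matrix.mul_apply] at h
  have h2 : ((∑ j, Complex.normSq (W i j) : ℝ) : ℂ) = 1 := by
    push_cast
    rw [show (1 : ℂ) = (1 : Matrix n n ℂ) i i from (Matrix.one_apply_eq i).symm, ← h]
    congr 1; ext j
    rw [Matrix.star_apply, ← Complex.mul_conj]
    rfl
  exact_mod_cast h2

lemma sum_normSq_col {W : Matrix n n ℂ} (h1 : star W * W = 1) (j : n) :
    ∑ i, Complex.normSq (W i j) = 1 := by
  have := sum_normSq_row (W := star W) (by rw [star_star, h1]) j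
  simpa [Matrix.star_apply, Complex.normSq_conj] using this

lemma trace_sq {A : Matrix n n ℂ} (hA : A.IsHermitian) :
    (A * A).trace = ((∑ i, hA.eigenvalues i ^ 2 : ℝ) : ℂ) := by
  rw [trace_key hA hA, (Matrix.mem_unitaryGroup_iff').mp (hA.eigenvectorUnitary).2]
  norm_cast
  congr 1; ext i
  simp [Matrix.one_apply, apply_ite Complex.normSq, Finset.sum_ite_eq', sq]

lemma frob_sq_eq {m : Type*} [Fintype m] (A : Matrix m m ℂ) :
    frob A ^ 2 = ∑ i, ∑ j, ‖A i j‖ ^ 2 := by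
  rw [frob, Real.sq_sqrt]
  positivity

lemma frob_key {A B : Matrix n n ℂ} (hA : A.IsHermitian) (hB : B.IsHermitian) :
    ∑ i, ∑ j, Complex.normSq ((star (hA.eigenvectorUnitary : Matrix n n ℂ) *
        (hB.eigenvectorUnitary : Matrix n n ℂ)) i j) * (hA.eigenvalues i - hB.eigenvalues j)^2
      = frob (A - B) ^ 2 := by
  set U := (hA.eigenvectorUnitary : Matrix n n ℂ) with hUdef
  set V := (hB.eigenvectorUnitary : Matrix n n ℂ) with hVdef
  set W := star U * V with hW
  set a := hA.eigenvalues with ha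
  set b := hB.eigenvalues with hb
  have hU : star U * U = 1 := (Matrix.mem_unitaryGroup_iff').mp (hA.eigenvectorUnitary).2
  have hV : star V * V = 1 := (Matrix.mem_unitaryGroup_iff').mp (hB.eigenvectorUnitary).2
  have hV2 : V * star V = 1 := (Matrix.mem_unitaryGroup_iff).mp (hB.eigenvectorUnitary).2
  have hU2 : U * star U = 1 := (Matrix.mem_unitaryGroup_iff).mp (hA.eigenvectorUnitary).2
  have hWr : ∀ i, ∑ j, Complex.normSq (W i j) = 1 := by
    intro i
    apply sum_normSq_row (h1 := ?_) i
    rw [hW, Matrix.star_mul, star_star, Matrix.mul_assoc, ← Matrix.mul_assoc V, hV2,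
      Matrix.one_mul, hU]
  have hWc : ∀ j, ∑ i, Complex.normSq (W i j) = 1 := by
    intro j
    apply sum_normSq_col (h1 := ?_) j
    rw [hW, Matrix.star_mul, star_star, Matrix.mul_assoc, ← Matrix.mul_assoc U, hU2,
      Matrix.one_mul, hV]
  have hT : (A * B).trace = ((∑ i, ∑ j, a i * b j * Complex.normSq (W i j) : ℝ) : ℂ) :=
    trace_key hA hB
  have htr : ((A - B) * (A - B)).trace
      = ((∑ i, a i ^ 2) - 2 * (∑ i, ∑ j, a i * b j * Complex.normSq (W i j))
          + (∑ j, b j ^ 2) : ℝ) := by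
    have e1 : (A - B) * (A - B) = A * A - A * B - B * A + B * B := by noncomm_ring
    rw [e1, Matrix.trace_add, Matrix.trace_sub, Matrix.trace_sub, trace_sq hA, trace_sq hB,
      hT, trace_mul_comm B A, hT]
    push_cast
    ring
  have hfrob : ((frob (A - B) ^ 2 : ℝ) : ℂ) = ((A - B) * (A - B)).trace := by
    rw [frob_sq_eq, Matrix.trace]
    push_cast
    congr 1
    ext i
    rw [Matrix.diag_apply, Matrix.mul_apply]
    congr 1
    ext j
    have hD : (A - B) j i = star ((A - B) i j) := ((hA.sub hB).apply j i).symm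
    rw [hD, show star ((A - B) i j) = (starRingEnd ℂ) ((A - B) i j) from rfl, Complex.mul_conj]
    norm_cast
    exact Complex.sq_norm _
  have hreal : frob (A - B) ^ 2
      = (∑ i, a i ^ 2) - 2 * (∑ i, ∑ j, a i * b j * Complex.normSq (W i j)) + (∑ j, b j ^ 2) := by
    have := hfrob.trans htr
    exact_mod_cast this
  rw [hreal]
  have e2 : ∀ i, ∑ j, Complex.normSq (W i j) * (a i - b j)^2
      = a i ^ 2 - 2 * (∑ j, a i * b j * Complex.normSq (W i j))
        + ∑ j, Complex.normSq (W i j) * b j ^ 2 := by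
    intro i
    have h1 : ∑ j, Complex.normSq (W i j) * (a i - b j)^2
        = ∑ j, (Complex.normSq (W i j) * a i ^ 2 - 2 * (a i * b j * Complex.normSq (W i j))
          + Complex.normSq (W i j) * b j ^ 2) := by
      congr 1; ext j; ring
    rw [h1, Finset.sum_add_distrib, Finset.sum_sub_distrib, ← Finset.sum_mul, hWr i, one_mul,
      ← Finset.mul_sum]
  simp_rw [e2]
  have e3 : ∀ j, ∑ i, Complex.normSq (W i j) * b j ^ 2 = b j ^ 2 := by
    intro j
    rw [← Finset.sum_mul, hWc j, one_mul]
  have e4 : ∑ i, ∑ j, Complex.normSq (W i j) * b j ^ 2 = ∑ j, b j ^ 2 := by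
    rw [Finset.sum_comm]
    exact Finset.sum_congr rfl fun j _ => e3 j
  rw [Finset.sum_add_distrib, Finset.sum_sub_distrib, e4, ← Finset.mul_sum]

end SEG

set_option maxHeartbeats 2000000 in
theorem small_entropy_gain_implies_close {d : ℕ} (ρ ξ : Matrix (Fin d) (Fin d) ℂ)
    (hρ : ρ.PosSemidef) (hρt : ρ.trace = 1)
    (hξ : ξ.PosSemidef) (hξt : ξ.trace = 1)
    (p : ℝ) (hp : p ∈ Set.Ioo (0 : ℝ) 1) (δ : ℝ) (hδ : 0 ≤ δ)
    (h : vnEntropy (((1 - p : ℝ) : ℂ) • ρ + ((p : ℝ) : ℂ) • ξ) -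
        ((1 - p) * vnEntropy ρ + p * vnEntropy ξ) ≤ δ) :
    frob (ρ - ξ) ^ 2 ≤ 2 * Real.log 2 * δ / (p * (1 - p)) := by
  obtain ⟨hp0, hp1⟩ := hp
  have hp1' : (0:ℝ) < 1 - p := by linarith
  set σ : Matrix (Fin d) (Fin d) ℂ := ((1 - p : ℝ) : ℂ) • ρ + ((p : ℝ) : ℂ) • ξ with hσdef
  have hσH : σ.IsHermitian := by
    unfold Matrix.IsHermitian
    rw [hσdef, Matrix.conjTranspose_add, Matrix.conjTranspose_smul, Matrix.conjTranspose_smul,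
      hρ.1, hξ.1]
    simp [Complex.star_def, Complex.conj_ofReal]
  have hσP : σ.PosSemidef := by
    have cnn : ∀ r : ℝ, 0 ≤ r → 0 ≤ ((r:ℝ):ℂ) := by
      intro r hr
      rw [Complex.le_def]
      simp [hr]
    rw [hσdef]
    exact (hρ.smul (cnn _ hp1'.le)).add (hξ.smul (cnn _ hp0.le))
  have hσt : σ.trace = 1 := by
    rw [hσdef, Matrix.trace_add, Matrix.trace_smul, Matrix.trace_smul, hρt, hξt]
    simp only [smul_eq_mul, mul_one]
    push_cast; ring
  set a := hρ.1.eigenvalues with hadef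
  set b := hξ.1.eigenvalues with hbdef
  set c := hσH.eigenvalues with hcdef
  have suma : ∑ i, a i = 1 := by
    have := SEG.sum_eig hρ.1; rw [hρt] at this; exact_mod_cast this.symm
  have sumb : ∑ i, b i = 1 := by
    have := SEG.sum_eig hξ.1; rw [hξt] at this; exact_mod_cast this.symm
  have sumc : ∑ i, c i = 1 := by
    have := SEG.sum_eig hσH; rw [hσt] at this; exact_mod_cast this.symm
  have ha0 : ∀ i, 0 ≤ a i := hρ.eigenvalues_nonneg
  have hb0 : ∀ i, 0 ≤ b i := hξ.eigenvalues_nonneg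
  have hc0 : ∀ i, 0 ≤ c i := hσP.eigenvalues_nonneg
  have ha1 : ∀ i, a i ≤ 1 := fun i => by
    calc a i ≤ ∑ j, a j := Finset.single_le_sum (fun j _ => ha0 j) (Finset.mem_univ i)
    _ = 1 := suma
  have hb1 : ∀ i, b i ≤ 1 := fun i => by
    calc b i ≤ ∑ j, b j := Finset.single_le_sum (fun j _ => hb0 j) (Finset.mem_univ i)
    _ = 1 := sumb
  have hc1 : ∀ i, c i ≤ 1 := fun i => by
    calc c i ≤ ∑ j, c j := Finset.single_le_sum (fun j _ => hc0 j) (Finset.mem_univ i)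
    _ = 1 := sumc
  set U := (hρ.1.eigenvectorUnitary : Matrix (Fin d) (Fin d) ℂ) with hUdef
  set T := (hξ.1.eigenvectorUnitary : Matrix (Fin d) (Fin d) ℂ) with hTdef
  set V := (hσH.eigenvectorUnitary : Matrix (Fin d) (Fin d) ℂ) with hVdef
  set wρ : Fin d → Fin d → ℝ := fun i k => Complex.normSq ((star U * V) i k) with hwρdef
  set wξ : Fin d → Fin d → ℝ := fun j k => Complex.normSq ((star T * V) j k) with hwξdef
  have hU : star U * U = 1 := (Matrix.mem_unitaryGroup_iff').mp (hρ.1.eigenvectorUnitary).2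
  have hU2 : U * star U = 1 := (Matrix.mem_unitaryGroup_iff).mp (hρ.1.eigenvectorUnitary).2
  have hT : star T * T = 1 := (Matrix.mem_unitaryGroup_iff').mp (hξ.1.eigenvectorUnitary).2
  have hT2 : T * star T = 1 := (Matrix.mem_unitaryGroup_iff).mp (hξ.1.eigenvectorUnitary).2
  have hV : star V * V = 1 := (Matrix.mem_unitaryGroup_iff').mp (hσH.eigenvectorUnitary).2
  have hV2 : V * star V = 1 := (Matrix.mem_unitaryGroup_iff).mp (hσH.eigenvectorUnitary).2
  have hwρ0 : ∀ i k, 0 ≤ wρ i k := fun i k => Complex.normSq_nonneg _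
  have hwξ0 : ∀ j k, 0 ≤ wξ j k := fun j k => Complex.normSq_nonneg _
  have hwρrow : ∀ i, ∑ k, wρ i k = 1 := by
    intro i
    apply SEG.sum_normSq_row (h1 := ?_) i
    rw [Matrix.star_mul, star_star, Matrix.mul_assoc, ← Matrix.mul_assoc V, hV2,
      Matrix.one_mul, hU]
  have hwρcol : ∀ k, ∑ i, wρ i k = 1 := by
    intro k
    apply SEG.sum_normSq_col (h1 := ?_) k
    rw [Matrix.star_mul, star_star, Matrix.mul_assoc, ← Matrix.mul_assoc U, hU2,
      Matrix.one_mul, hV]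
  have hwξrow : ∀ j, ∑ k, wξ j k = 1 := by
    intro j
    apply SEG.sum_normSq_row (h1 := ?_) j
    rw [Matrix.star_mul, star_star, Matrix.mul_assoc, ← Matrix.mul_assoc V, hV2,
      Matrix.one_mul, hT]
  have hwξcol : ∀ k, ∑ j, wξ j k = 1 := by
    intro k
    apply SEG.sum_normSq_col (h1 := ?_) k
    rw [Matrix.star_mul, star_star, Matrix.mul_assoc, ← Matrix.mul_assoc T, hT2,
      Matrix.one_mul, hV]
  -- the key mixing relation
  have hF3 : ∀ k, (1 - p) * (∑ i, a i * wρ i k) + p * (∑ j, b j * wξ j k) = c k := by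
    intro k
    have hdiag := hσH.conjStarAlgAut_star_eigenvectorUnitary
    rw [Unitary.conjStarAlgAut_star_apply] at hdiag
    have hk := congrFun (congrFun hdiag k) k
    have hsplit : star V * σ * V
        = ((1 - p : ℝ) : ℂ) • (star V * ρ * V) + ((p : ℝ) : ℂ) • (star V * ξ * V) := by
      rw [hσdef, Matrix.mul_add, Matrix.add_mul, Matrix.mul_smul, Matrix.smul_mul,
        Matrix.mul_smul, Matrix.smul_mul]
    rw [hsplit] at hk
    rw [Matrix.add_apply, Matrix.smul_apply, Matrix.smul_apply,
      SEG.quad_key hρ.1 hσH k, SEG.quad_key hξ.1 hσH k, Matrix.diagonal_apply_eq] at hk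
    simp only [Function.comp_apply, smul_eq_mul] at hk
    have hk2 : (((1 - p) * (∑ i, a i * wρ i k) + p * (∑ j, b j * wξ j k) : ℝ) : ℂ)
        = ((c k : ℝ) : ℂ) := by
      push_cast
      push_cast at hk
      exact hk
    exact_mod_cast hk2
  -- entropies in nats
  have hl2 : (0:ℝ) < Real.log 2 := Real.log_pos (by norm_num)
  have entropy_eq : ∀ (M : Matrix (Fin d) (Fin d) ℂ) (hM : M.IsHermitian),
      Real.log 2 * vnEntropy M = -(∑ k, hM.eigenvalues k * Real.log (hM.eigenvalues k)) := by
    intro M hM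
    rw [vnEntropy, dif_pos hM, Finset.mul_sum, ← Finset.sum_neg_distrib]
    refine Finset.sum_congr rfl fun k _ => ?_
    rw [Real.logb]
    field_simp
  have hEσ := entropy_eq σ hσH
  have hEρ := entropy_eq ρ hρ.1
  have hEξ := entropy_eq ξ hξ.1
  -- pointwise inequality, summed
  have keyρ : ∑ i, ∑ k, wρ i k * ((a i - c k)^2/2)
      ≤ ∑ i, ∑ k, wρ i k * (a i * Real.log (a i) - a i * Real.log (c k) - a i + c k) := by
    refine Finset.sum_le_sum fun i _ => Finset.sum_le_sum fun k _ => ?_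
    rcases eq_or_lt_of_le (hc0 k) with hck | hck
    · have hS1nn : 0 ≤ ∑ i, a i * wρ i k :=
        Finset.sum_nonneg fun j _ => mul_nonneg (ha0 j) (hwρ0 j k)
      have hS2nn : 0 ≤ ∑ j, b j * wξ j k :=
        Finset.sum_nonneg fun j _ => mul_nonneg (hb0 j) (hwξ0 j k)
      have hF := hF3 k
      rw [← hck] at hF
      have hS1 : ∑ i, a i * wρ i k = 0 := by nlinarith
      have hterm : a i * wρ i k = 0 :=
        (Finset.sum_eq_zero_iff_of_nonneg
          (fun j _ => mul_nonneg (ha0 j) (hwρ0 j k))).mp hS1 i (Finset.mem_univ i)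
      rcases mul_eq_zero.mp hterm with hai | hwi
      · rw [hai, ← hck]
        simp [Real.log_zero]
      · rw [hwi, ← hck]
        simp
    · exact mul_le_mul_of_nonneg_left
        (SEG.scalar_key (ha0 i) (ha1 i) hck (hc1 k)) (hwρ0 i k)
  have keyξ : ∑ j, ∑ k, wξ j k * ((b j - c k)^2/2)
      ≤ ∑ j, ∑ k, wξ j k * (b j * Real.log (b j) - b j * Real.log (c k) - b j + c k) := by
    refine Finset.sum_le_sum fun j _ => Finset.sum_le_sum fun k _ => ?_
    rcases eq_or_lt_of_le (hc0 k) with hck | hck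
    · have hS1nn : 0 ≤ ∑ i, a i * wρ i k :=
        Finset.sum_nonneg fun j _ => mul_nonneg (ha0 j) (hwρ0 j k)
      have hS2nn : 0 ≤ ∑ j, b j * wξ j k :=
        Finset.sum_nonneg fun j _ => mul_nonneg (hb0 j) (hwξ0 j k)
      have hF := hF3 k
      rw [← hck] at hF
      have hS2 : ∑ j, b j * wξ j k = 0 := by nlinarith
      have hterm : b j * wξ j k = 0 :=
        (Finset.sum_eq_zero_iff_of_nonneg
          (fun i _ => mul_nonneg (hb0 i) (hwξ0 i k))).mp hS2 j (Finset.mem_univ j)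
      rcases mul_eq_zero.mp hterm with hbj | hwj
      · rw [hbj, ← hck]
        simp [Real.log_zero]
      · rw [hwj, ← hck]
        simp
    · exact mul_le_mul_of_nonneg_left
        (SEG.scalar_key (hb0 j) (hb1 j) hck (hc1 k)) (hwξ0 j k)
  -- the double-sum identities
  have identρ : ∑ i, ∑ k, wρ i k * (a i * Real.log (a i) - a i * Real.log (c k) - a i + c k)
      = ∑ i, a i * Real.log (a i) - ∑ k, (∑ i, a i * wρ i k) * Real.log (c k) := by
    have t1 : ∑ i, ∑ k, wρ i k * (a i * Real.log (a i)) = ∑ i, a i * Real.log (a i) := by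
      refine Finset.sum_congr rfl fun i _ => ?_
      rw [← Finset.sum_mul, hwρrow i, one_mul]
    have t2 : ∑ i, ∑ k, wρ i k * (a i * Real.log (c k))
        = ∑ k, (∑ i, a i * wρ i k) * Real.log (c k) := by
      rw [Finset.sum_comm]
      refine Finset.sum_congr rfl fun k _ => ?_
      rw [Finset.sum_mul]
      refine Finset.sum_congr rfl fun i _ => ?_
      ring
    have t3 : ∑ i, ∑ k, wρ i k * a i = 1 := by
      have e : ∀ i, ∑ k, wρ i k * a i = a i := fun i => by
        rw [← Finset.sum_mul, hwρrow i, one_mul]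
      rw [show (∑ i, ∑ k, wρ i k * a i) = ∑ i, a i from
        Finset.sum_congr rfl fun i _ => e i, suma]
    have t4 : ∑ i, ∑ k, wρ i k * c k = 1 := by
      rw [Finset.sum_comm]
      have e : ∀ k, ∑ i, wρ i k * c k = c k := fun k => by
        rw [← Finset.sum_mul, hwρcol k, one_mul]
      rw [show (∑ k, ∑ i, wρ i k * c k) = ∑ k, c k from
        Finset.sum_congr rfl fun k _ => e k, sumc]
    have expand : ∑ i, ∑ k, wρ i k * (a i * Real.log (a i) - a i * Real.log (c k) - a i + c k)
        = (∑ i, ∑ k, wρ i k * (a i * Real.log (a i)))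
          - (∑ i, ∑ k, wρ i k * (a i * Real.log (c k)))
          - (∑ i, ∑ k, wρ i k * a i) + (∑ i, ∑ k, wρ i k * c k) := by
      simp_rw [mul_add, mul_sub]
      simp_rw [Finset.sum_add_distrib, Finset.sum_sub_distrib]
    rw [expand, t1, t2, t3, t4]
    ring
  have identξ : ∑ j, ∑ k, wξ j k * (b j * Real.log (b j) - b j * Real.log (c k) - b j + c k)
      = ∑ j, b j * Real.log (b j) - ∑ k, (∑ j, b j * wξ j k) * Real.log (c k) := by
    have t1 : ∑ j, ∑ k, wξ j k * (b j * Real.log (b j)) = ∑ j, b j * Real.log (b j) := by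
      refine Finset.sum_congr rfl fun j _ => ?_
      rw [← Finset.sum_mul, hwξrow j, one_mul]
    have t2 : ∑ j, ∑ k, wξ j k * (b j * Real.log (c k))
        = ∑ k, (∑ j, b j * wξ j k) * Real.log (c k) := by
      rw [Finset.sum_comm]
      refine Finset.sum_congr rfl fun k _ => ?_
      rw [Finset.sum_mul]
      refine Finset.sum_congr rfl fun j _ => ?_
      ring
    have t3 : ∑ j, ∑ k, wξ j k * b j = 1 := by
      have e : ∀ j, ∑ k, wξ j k * b j = b j := fun j => by
        rw [← Finset.sum_mul, hwξrow j, one_mul]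
      rw [show (∑ j, ∑ k, wξ j k * b j) = ∑ j, b j from
        Finset.sum_congr rfl fun j _ => e j, sumb]
    have t4 : ∑ j, ∑ k, wξ j k * c k = 1 := by
      rw [Finset.sum_comm]
      have e : ∀ k, ∑ j, wξ j k * c k = c k := fun k => by
        rw [← Finset.sum_mul, hwξcol k, one_mul]
      rw [show (∑ k, ∑ j, wξ j k * c k) = ∑ k, c k from
        Finset.sum_congr rfl fun k _ => e k, sumc]
    have expand : ∑ j, ∑ k, wξ j k * (b j * Real.log (b j) - b j * Real.log (c k) - b j + c k)
        = (∑ j, ∑ k, wξ j k * (b j * Real.log (b j)))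
          - (∑ j, ∑ k, wξ j k * (b j * Real.log (c k)))
          - (∑ j, ∑ k, wξ j k * b j) + (∑ j, ∑ k, wξ j k * c k) := by
      simp_rw [mul_add, mul_sub]
      simp_rw [Finset.sum_add_distrib, Finset.sum_sub_distrib]
    rw [expand, t1, t2, t3, t4]
    ring
  -- combine the cross terms
  have hSum : (1 - p) * (∑ k, (∑ i, a i * wρ i k) * Real.log (c k))
      + p * (∑ k, (∑ j, b j * wξ j k) * Real.log (c k))
      = ∑ k, c k * Real.log (c k) := by
    rw [Finset.mul_sum, Finset.mul_sum, ← Finset.sum_add_distrib]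
    refine Finset.sum_congr rfl fun k _ => ?_
    have := hF3 k
    calc (1 - p) * ((∑ i, a i * wρ i k) * Real.log (c k))
        + p * ((∑ j, b j * wξ j k) * Real.log (c k))
        = ((1 - p) * (∑ i, a i * wρ i k) + p * (∑ j, b j * wξ j k)) * Real.log (c k) := by ring
      _ = c k * Real.log (c k) := by rw [this]
  -- assemble the entropy-gap lower bound in nats
  have main1 : (1 - p) * (∑ i, ∑ k, wρ i k * ((a i - c k)^2/2))
      + p * (∑ j, ∑ k, wξ j k * ((b j - c k)^2/2))
      ≤ Real.log 2 * (vnEntropy σ - ((1 - p) * vnEntropy ρ + p * vnEntropy ξ)) := by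
    have step1 : (1 - p) * (∑ i, ∑ k, wρ i k * ((a i - c k)^2/2))
        + p * (∑ j, ∑ k, wξ j k * ((b j - c k)^2/2))
        ≤ (1 - p) * (∑ i, a i * Real.log (a i) - ∑ k, (∑ i, a i * wρ i k) * Real.log (c k))
          + p * (∑ j, b j * Real.log (b j) - ∑ k, (∑ j, b j * wξ j k) * Real.log (c k)) := by
      rw [← identρ, ← identξ]
      exact add_le_add (mul_le_mul_of_nonneg_left keyρ hp1'.le)
        (mul_le_mul_of_nonneg_left keyξ hp0.le)
    have step2 : (1 - p) * (∑ i, a i * Real.log (a i)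
          - ∑ k, (∑ i, a i * wρ i k) * Real.log (c k))
        + p * (∑ j, b j * Real.log (b j) - ∑ k, (∑ j, b j * wξ j k) * Real.log (c k))
        = Real.log 2 * (vnEntropy σ - ((1 - p) * vnEntropy ρ + p * vnEntropy ξ)) := by
      have expand : Real.log 2 * (vnEntropy σ - ((1 - p) * vnEntropy ρ + p * vnEntropy ξ))
          = Real.log 2 * vnEntropy σ - (1 - p) * (Real.log 2 * vnEntropy ρ)
            - p * (Real.log 2 * vnEntropy ξ) := by ring
      rw [expand, hEσ, hEρ, hEξ]
      linarith [hSum]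
    linarith [step1, step2.ge]
  have main2 : Real.log 2 * (vnEntropy σ - ((1 - p) * vnEntropy ρ + p * vnEntropy ξ))
      ≤ Real.log 2 * δ := by
    apply mul_le_mul_of_nonneg_left _ hl2.le
    exact h
  -- identify the quadratic sums with Frobenius norms
  have frob_smul : ∀ (r : ℝ) (M : Matrix (Fin d) (Fin d) ℂ),
      frob ((r : ℂ) • M)^2 = r^2 * frob M^2 := by
    intro r M
    rw [SEG.frob_sq_eq, SEG.frob_sq_eq, Finset.mul_sum]
    refine Finset.sum_congr rfl fun i _ => ?_
    rw [Finset.mul_sum]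
    refine Finset.sum_congr rfl fun j _ => ?_
    rw [Matrix.smul_apply, smul_eq_mul, norm_mul, Complex.norm_real, Real.norm_eq_abs, mul_pow, sq_abs]
  have hfρσ : ∑ i, ∑ k, wρ i k * (a i - c k)^2 = p^2 * frob (ρ - ξ)^2 := by
    have h1 := SEG.frob_key hρ.1 hσH
    have h2 : ρ - σ = ((p : ℝ) : ℂ) • (ρ - ξ) := by
      rw [hσdef]
      push_cast
      module
    rw [h1, h2, frob_smul]
  have hfξσ : ∑ j, ∑ k, wξ j k * (b j - c k)^2 = (1 - p)^2 * frob (ρ - ξ)^2 := by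
    have h1 := SEG.frob_key hξ.1 hσH
    have h2 : ξ - σ = ((1 - p : ℝ) : ℂ) • (ξ - ρ) := by
      rw [hσdef]
      push_cast
      module
    have h3 : frob (ξ - ρ)^2 = frob (ρ - ξ)^2 := by
      rw [SEG.frob_sq_eq, SEG.frob_sq_eq]
      refine Finset.sum_congr rfl fun i _ => Finset.sum_congr rfl fun j _ => ?_
      rw [Matrix.sub_apply, Matrix.sub_apply, norm_sub_rev]
    rw [h1, h2, frob_smul, h3]
  have halfρ : ∑ i, ∑ k, wρ i k * ((a i - c k)^2/2)
      = (∑ i, ∑ k, wρ i k * (a i - c k)^2) / 2 := by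
    rw [Finset.sum_div]
    refine Finset.sum_congr rfl fun i _ => ?_
    rw [Finset.sum_div]
    refine Finset.sum_congr rfl fun k _ => ?_
    ring
  have halfξ : ∑ j, ∑ k, wξ j k * ((b j - c k)^2/2)
      = (∑ j, ∑ k, wξ j k * (b j - c k)^2) / 2 := by
    rw [Finset.sum_div]
    refine Finset.sum_congr rfl fun j _ => ?_
    rw [Finset.sum_div]
    refine Finset.sum_congr rfl fun k _ => ?_
    ring
  have final : p * (1 - p) / 2 * frob (ρ - ξ)^2 ≤ Real.log 2 * δ := by
    have hchain := le_trans main1 main2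
    rw [halfρ, halfξ, hfρσ, hfξσ] at hchain
    calc p * (1 - p) / 2 * frob (ρ - ξ)^2
        = (1 - p) * (p^2 * frob (ρ - ξ)^2 / 2) + p * ((1 - p)^2 * frob (ρ - ξ)^2 / 2) := by ring
      _ ≤ Real.log 2 * δ := hchain
  rw [le_div_iff₀ (mul_pos hp0 hp1')]
  nlinarith [final]
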